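/- Suppose in addition that g is ergodic and that C ⊂ B' is a measurable set with ν(C) > 0 and T(C) = C (with T restricted to C a bijection of C). Then ∫_C N dν ≥ 1. -/

import Mathlib

open MeasureTheory
open scoped ENNReal

/-- lower bound on the integral of the return time over
an invariant subset of the kernel.  `g` is an invertible bi-measurable
measure-preserving transformation of the probability space `(X, ν)` which
is ergodic, `B'` is measurable, `N` is measurable with `N(x) ≥ 1` on `B'`,
and `T x = g^[N x] x` maps `B'` bijectively onto itself.  If `C ⊆ B'` is
measurable with `ν(C) > 0` and `T` restricted to `C` is a bijection of `C`
(in particular `T(C) = C`), then `∫_C N dν ≥ 1`. -/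
theorem stmt_11 {X : Type*} [MeasurableSpace X]
    (ν : Measure X) [IsProbabilityMeasure ν]
    (g : X ≃ᵐ X) (hg : MeasurePreserving g ν ν)
    (herg : Ergodic (⇑g) ν)
    (B' : Set X) (hB' : MeasurableSet B')
    (N : X → ℕ) (hNmeas : Measurable N) (hN1 : ∀ x ∈ B', 1 ≤ N x)
    (T : X → X) (hT : ∀ x, T x = (⇑g)^[N x] x)
    (hbij : Set.BijOn T B' B')
    (C : Set X) (hC : MeasurableSet C) (hCB : C ⊆ B') (hCpos : 0 < ν C)
    (hTC : Set.BijOn T C C) :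
    1 ≤ ∫⁻ x in C, (N x : ℝ≥0∞) ∂ν := by
  -- the level sets of N inside C
  set D : ℕ → Set X := fun k => C ∩ N ⁻¹' {k} with hD
  have hDmeas : ∀ k, MeasurableSet (D k) :=
    fun k => hC.inter (hNmeas (measurableSet_singleton k))
  -- images under iterates equal preimages under iterates of the inverse
  have himg : ∀ (i : ℕ) (s : Set X), (⇑g)^[i] '' s = (⇑g.symm)^[i] ⁻¹' s := by
    intro i s
    ext y
    constructor
    · rintro ⟨x, hx, rfl⟩
      simpa [Function.LeftInverse.iterate g.symm_apply_apply i x] using hx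
    · intro hy
      exact ⟨(⇑g.symm)^[i] y, hy, Function.RightInverse.iterate g.apply_symm_apply i y⟩
  have hgsymm : MeasurePreserving (⇑g.symm) ν ν := MeasurePreserving.symm g hg
  -- the union of orbit segments
  set U : Set X := ⋃ k, ⋃ i ∈ Finset.range k, (⇑g)^[i] '' (D k) with hU
  have hUmeas : MeasurableSet U := by
    refine MeasurableSet.iUnion fun k => MeasurableSet.iUnion fun i =>
      MeasurableSet.iUnion fun _ => ?_
    rw [himg]
    exact (g.symm.measurable.iterate i) (hDmeas k)
  have hCU : C ⊆ U := by
    intro x hx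
    have hk : 0 < N x := hN1 x (hCB hx)
    refine Set.mem_iUnion.2 ⟨N x, Set.mem_iUnion.2 ⟨0, Set.mem_iUnion.2
      ⟨Finset.mem_range.2 hk, ⟨x, ⟨hx, rfl⟩, rfl⟩⟩⟩⟩
  -- U is (forward) invariant
  have hinv : U ⊆ (⇑g) ⁻¹' U := by
    rintro y hy
    simp only [hU, Set.mem_iUnion] at hy
    obtain ⟨k, i, hik, x, ⟨hxC, hxN⟩, rfl⟩ := hy
    have hik' : i < k := Finset.mem_range.1 hik
    simp only [Set.mem_preimage]
    rcases lt_or_eq_of_le (Nat.succ_le_of_lt hik') with h | h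
    · refine Set.mem_iUnion.2 ⟨k, Set.mem_iUnion.2 ⟨i + 1, Set.mem_iUnion.2
        ⟨Finset.mem_range.2 h, ⟨x, ⟨hxC, hxN⟩, ?_⟩⟩⟩⟩
      rw [Function.iterate_succ_apply']
    · -- g (g^[k-1] x) = g^[k] x = T x ∈ C
      have hxN' : N x = k := hxN
      have hgx : g ((⇑g)^[i] x) = T x := by
        rw [hT, hxN', ← h, Function.iterate_succ_apply']
      rw [hgx]
      have hTx : T x ∈ C := hTC.mapsTo hxC
      have hk' : 0 < N (T x) := hN1 _ (hCB hTx)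
      exact Set.mem_iUnion.2 ⟨N (T x), Set.mem_iUnion.2 ⟨0, Set.mem_iUnion.2
        ⟨Finset.mem_range.2 hk', ⟨T x, ⟨hTx, rfl⟩, rfl⟩⟩⟩⟩
  -- by ergodicity, ν U = 1
  have hU1 : ν U = 1 := by
    rcases herg.ae_empty_or_univ_of_ae_le_preimage' hUmeas.nullMeasurableSet
        (HasSubset.Subset.eventuallyLE hinv) (measure_ne_top ν U) with h | h
    · exfalso
      have hU0 : ν U = 0 := by simpa using measure_congr h
      exact absurd (measure_mono_null hCU hU0) hCpos.ne'
    · have : ν U = ν Set.univ := measure_congr h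
      simpa using this
  -- measure of each piece
  have hνpiece : ∀ (k i : ℕ), ν ((⇑g)^[i] '' (D k)) = ν (D k) := by
    intro k i
    rw [himg]
    exact (hgsymm.iterate i).measure_preimage (hDmeas k).nullMeasurableSet
  -- bound ν U by the sum
  have hUle : (1 : ℝ≥0∞) ≤ ∑' (k : ℕ), (k : ℝ≥0∞) * ν (D k) := by
    rw [← hU1]
    refine le_trans (measure_iUnion_le _) (ENNReal.tsum_le_tsum fun k => ?_)
    refine le_trans (measure_biUnion_finset_le _ _) ?_
    simp only [hνpiece]
    simp [Finset.sum_const, mul_comm]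
  -- compute the integral
  have hint : ∫⁻ x in C, (N x : ℝ≥0∞) ∂ν = ∑' (k : ℕ), (k : ℝ≥0∞) * ν (D k) := by
    have hCeq : C = ⋃ k, D k := by
      ext x; simp [hD]
    have hdisj : Pairwise (Function.onFun Disjoint (fun k => D k)) := by
      intro a b hab
      refine Set.disjoint_left.2 fun x hxa hxb => hab ?_
      rcases hxa with ⟨-, ha⟩; rcases hxb with ⟨-, hb⟩
      simp only [Set.mem_preimage, Set.mem_singleton_iff] at ha hb
      rw [← ha, ← hb]
    rw [hCeq, lintegral_iUnion hDmeas hdisj]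
    refine tsum_congr fun k => ?_
    have : ∀ x ∈ D k, (N x : ℝ≥0∞) = (k : ℝ≥0∞) := by
      rintro x ⟨-, hx⟩
      simp only [Set.mem_preimage, Set.mem_singleton_iff] at hx
      rw [hx]
    rw [setLIntegral_congr_fun (hDmeas k) (fun x hx => this x hx),
      setLIntegral_const, mul_comm]
  rw [hint]
  exact hUle
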